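/- Let x, y be nonzero vectors in ℝⁿ whose unit vectors satisfy ‖x/‖x‖ − y/‖y‖‖ ≥ δ for some 0 < δ ≤ 2. Then ‖x − y‖ ≥ (δ/4)·(‖x‖ + ‖y‖). -/

import Mathlib

open Set Metric Filter Topology Pointwise

noncomputable def innerDist {E : Type*} [NormedAddCommGroup E] (Z : Set E) (x y : E) : ENNReal :=
  ⨅ (γ : ℝ → E) (_ : ContinuousOn γ (Set.Icc 0 1)) (_ : Set.MapsTo γ (Set.Icc 0 1) Z)
    (_ : γ 0 = x) (_ : γ 1 = y), eVariationOn γ (Set.Icc 0 1)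

def IsLNE {E : Type*} [NormedAddCommGroup E] (Z : Set E) (C : ℝ) : Prop :=
  ∀ x ∈ Z, ∀ y ∈ Z, innerDist Z x y ≤ ENNReal.ofReal (C * ‖x - y‖)

lemma aux5 {E : Type*} [NormedAddCommGroup E] [NormedSpace ℝ E]
    (x y : E) (hx : x ≠ 0) (hy : y ≠ 0)
    (δ : ℝ) (hδ0 : 0 < δ)
    (h : δ ≤ ‖‖x‖⁻¹ • x - ‖y‖⁻¹ • y‖) (hba : ‖y‖ ≤ ‖x‖) :
    δ / 4 * (‖x‖ + ‖y‖) ≤ ‖x - y‖ := by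
  have ha : (0:ℝ) < ‖x‖ := norm_pos_iff.mpr hx
  have hb : (0:ℝ) < ‖y‖ := norm_pos_iff.mpr hy
  have h1 : ‖x‖ * ‖‖x‖⁻¹ • x - ‖y‖⁻¹ • y‖ = ‖x - (‖x‖/‖y‖) • y‖ := by
    rw [← norm_smul_of_nonneg ha.le, smul_sub, smul_smul, smul_smul,
      mul_inv_cancel₀ ha.ne', one_smul, div_eq_mul_inv]
  have h2 : ‖x - (‖x‖/‖y‖) • y‖ ≤ ‖x - y‖ + ‖y - (‖x‖/‖y‖) • y‖ := by
    calc ‖x - (‖x‖/‖y‖) • y‖ = ‖(x - y) + (y - (‖x‖/‖y‖) • y)‖ := by abel_nf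
      _ ≤ _ := norm_add_le _ _
  have h3 : ‖y - (‖x‖/‖y‖) • y‖ = ‖x‖ - ‖y‖ := by
    rw [show y - (‖x‖/‖y‖) • y = (1 - ‖x‖/‖y‖) • y by rw [sub_smul, one_smul],
      norm_smul, Real.norm_eq_abs, abs_of_nonpos (by rw [sub_nonpos]; exact (one_le_div hb).mpr hba)]
    field_simp
    ring
  have h4 : |‖x‖ - ‖y‖| ≤ ‖x - y‖ := abs_norm_sub_norm_le x y
  have h5 : δ * ‖x‖ ≤ ‖x‖ * ‖‖x‖⁻¹ • x - ‖y‖⁻¹ • y‖ := by nlinarith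
  rw [abs_of_nonneg (by linarith)] at h4
  nlinarith

theorem stmt_5 {n : ℕ} (x y : EuclideanSpace ℝ (Fin n)) (hx : x ≠ 0) (hy : y ≠ 0)
    (δ : ℝ) (hδ0 : 0 < δ) (hδ2 : δ ≤ 2)
    (h : δ ≤ ‖‖x‖⁻¹ • x - ‖y‖⁻¹ • y‖) :
    δ / 4 * (‖x‖ + ‖y‖) ≤ ‖x - y‖ := by
  rcases le_total ‖y‖ ‖x‖ with hba | hab
  · exact aux5 x y hx hy δ hδ0 h hba
  · have := aux5 y x hy hx δ hδ0 (by rwa [norm_sub_rev]) hab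
    rw [norm_sub_rev]; linarith
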